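/- Let α be a non-zero algebraic number that is not a root of unity. Then M_∞(α) ≥ inf{H(γ) : γ ∈ ℚ(α) and H(γ) > 1}, where H is the absolute Weil height and M_∞ is the strong (non-Archimedean) metric Mahler measure. -/

import Mathlib

open Polynomial

noncomputable section

local notation "K" => AlgebraicClosure ℚ

/-- The leading coefficient of the primitive integer minimal polynomial of `α`,
i.e. the lcm of the denominators of the coefficients of `minpoly ℚ α`. -/
def primLead (α : K) : ℕ :=
  (minpoly ℚ α).support.lcm fun i => ((minpoly ℚ α).coeff i).den

/-- The Mahler measure `M(α)`: the leading coefficient of the integer minimal polynomial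
of `α` times the product of `max 1 |z|` over the complex roots `z` of the minimal
polynomial.  Equivalently, `M(α) = H(α) ^ deg α` where `H` is the absolute Weil height
`H(α) = ∏_v max {1, |α|_v}`. -/
def mahlerM (α : K) : ℝ :=
  primLead α * (((minpoly ℚ α).aroots ℂ).map fun z => max 1 ‖z‖).prod

/-- The absolute Weil height `H(α) = ∏_v max {1, |α|_v} = M(α) ^ (1 / deg α)`. -/
def weilH (α : K) : ℝ :=
  mahlerM α ^ (((minpoly ℚ α).natDegree : ℝ))⁻¹

/-- The strong (non-Archimedean) metric Mahler measure
`M_∞(α) = inf { max_n M(αₙ) : α = α₁α₂⋯ , αₙ = 1 for a.e. n }`. -/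
def MInf (α : Kˣ) : ℝ :=
  sInf {t : ℝ | ∃ a : ℕ → Kˣ, {n | a n ≠ 1}.Finite ∧ (∏ᶠ n, a n) = α ∧
    t = ⨆ n, mahlerM (a n : K)}

namespace StrongMetricAux

open IntermediateField

/-- Root-of-unity predicate. -/
def IsRou (x : K) : Prop := ∃ n : ℕ, 0 < n ∧ x ^ n = 1

lemma IsRou.one : IsRou 1 := ⟨1, one_pos, one_pow 1⟩

lemma IsRou.mul {x y : K} (hx : IsRou x) (hy : IsRou y) : IsRou (x * y) := by
  obtain ⟨n, hn, hxn⟩ := hx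
  obtain ⟨m, hm, hym⟩ := hy
  exact ⟨n * m, Nat.mul_pos hn hm, by
    rw [mul_pow, pow_mul, hxn, one_pow, one_mul, mul_comm, pow_mul, hym, one_pow]⟩

lemma IsRou.pow {x : K} (hx : IsRou x) (k : ℕ) : IsRou (x ^ k) := by
  obtain ⟨n, hn, hxn⟩ := hx
  exact ⟨n, hn, by rw [← pow_mul, mul_comm, pow_mul, hxn, one_pow]⟩

lemma IsRou.of_pow {x : K} {k : ℕ} (hk : 0 < k) (h : IsRou (x ^ k)) : IsRou x := by
  obtain ⟨n, hn, hxn⟩ := h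
  exact ⟨k * n, Nat.mul_pos hk hn, by rw [pow_mul]; exact hxn⟩

lemma isIntegralQ (x : K) : IsIntegral ℚ x :=
  (@Algebra.IsAlgebraic.isAlgebraic ℚ K _ _ _ (AlgebraicClosure.isAlgebraic ℚ) x).isIntegral

/-- products of `max 1 |z|` are at least 1. -/
lemma one_le_prodmax (m : Multiset ℂ) :
    1 ≤ (m.map fun z => max 1 ‖z‖).prod := by
  induction m using Multiset.induction_on with
  | empty => simp
  | cons z m ih =>
    rw [Multiset.map_cons, Multiset.prod_cons]
    calc (1:ℝ) = 1 * 1 := by ring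
    _ ≤ max 1 ‖z‖ * (m.map fun z => max 1 ‖z‖).prod := by
        apply mul_le_mul (le_max_left _ _) ih zero_le_one
        positivity

lemma single_le_prodmax {m : Multiset ℂ} {z : ℂ} (hz : z ∈ m) :
    max 1 ‖z‖ ≤ (m.map fun z => max 1 ‖z‖).prod := by
  have hcons : z ::ₘ m.erase z = m := Multiset.cons_erase hz
  conv_rhs => rw [← hcons]
  rw [Multiset.map_cons, Multiset.prod_cons]
  exact le_mul_of_one_le_right (by positivity) (one_le_prodmax _)

lemma prodmax_mono {m₁ m₂ : Multiset ℂ} (h : m₁ ≤ m₂) :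
    (m₁.map fun z => max 1 ‖z‖).prod ≤
      (m₂.map fun z => max 1 ‖z‖).prod := by
  obtain ⟨u, rfl⟩ := Multiset.le_iff_exists_add.mp h
  rw [Multiset.map_add, Multiset.prod_add]
  have h1 := one_le_prodmax m₁
  have h2 := one_le_prodmax u
  nlinarith

lemma abs_prod_le_prodmax (m : Multiset ℂ) :
    ‖m.prod‖ ≤ (m.map fun z => max 1 ‖z‖).prod := by
  induction m using Multiset.induction_on with
  | empty => simp
  | cons z m ih =>
    rw [Multiset.map_cons, Multiset.prod_cons, Multiset.prod_cons, norm_mul]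
    apply mul_le_mul (le_max_right _ _) ih (norm_nonneg _)
    positivity

lemma prod_abs_le_one {m : Multiset ℂ} (h : ∀ z ∈ m, ‖z‖ ≤ 1) :
    (m.map fun z => ‖z‖).prod ≤ 1 := by
  induction m using Multiset.induction_on with
  | empty => simp
  | cons z m ih =>
    rw [Multiset.map_cons, Multiset.prod_cons]
    have h1 : ‖z‖ ≤ 1 := h z (Multiset.mem_cons_self _ _)
    have h2 : (m.map fun z => ‖z‖).prod ≤ 1 :=
      ih fun w hw => h w (Multiset.mem_cons_of_mem hw)
    have h3 : (0:ℝ) ≤ (m.map fun z => ‖z‖).prod := by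
      apply Multiset.prod_nonneg
      intro x hx
      obtain ⟨w, _, rfl⟩ := Multiset.mem_map.mp hx
      exact norm_nonneg w
    nlinarith [norm_nonneg z]

lemma primLead_pos (x : K) : 0 < primLead x := by
  rw [Nat.pos_iff_ne_zero]
  intro h
  rw [primLead, Finset.lcm_eq_zero_iff] at h
  obtain ⟨i, _, hi⟩ := h
  exact (Rat.den_nz _) hi

lemma one_le_mahlerM (x : K) : 1 ≤ mahlerM x := by
  rw [mahlerM]
  have h1 : (1:ℝ) ≤ (primLead x : ℝ) := by
    exact_mod_cast Nat.one_le_iff_ne_zero.mpr (primLead_pos x).ne'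
  have h2 := one_le_prodmax ((minpoly ℚ x).aroots ℂ)
  nlinarith

lemma primLead_eq_one {x : K} (hx : IsIntegral ℤ x) : primLead x = 1 := by
  have h := minpoly.isIntegrallyClosed_eq_field_fractions' ℚ hx
  apply Nat.dvd_one.mp
  apply Finset.lcm_dvd
  intro i _
  rw [h, coeff_map, eq_intCast, Rat.den_intCast]

lemma den_one_int {x : K} (h : ∀ i, ((minpoly ℚ x).coeff i).den = 1) : IsIntegral ℤ x := by
  set p := minpoly ℚ x with hp
  set q : ℤ[X] := ∑ i ∈ p.support, Polynomial.C (p.coeff i).num * X ^ i with hq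
  have hmap : q.map (algebraMap ℤ ℚ) = p := by
    rw [hq, Polynomial.map_sum]
    conv_rhs => rw [p.as_sum_support]
    apply Finset.sum_congr rfl
    intro i _
    rw [Polynomial.map_mul, Polynomial.map_pow, map_C, map_X, ← C_mul_X_pow_eq_monomial]
    congr 1
    rw [eq_intCast]
    exact congrArg Polynomial.C ((Rat.den_eq_one_iff _).mp (h i))
  have hmonic : q.Monic := by
    have hpm : p.Monic := minpoly.monic (isIntegralQ x)
    have hm : (q.map (algebraMap ℤ ℚ)).Monic := hmap ▸ hpm
    exact Polynomial.monic_of_injective (fun a b hab => by exact_mod_cast hab) hm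
  refine ⟨q, hmonic, ?_⟩
  have : (Polynomial.aeval x) q = 0 := by
    rw [← aeval_map_algebraMap ℚ x q, hmap, hp]
    exact minpoly.aeval ℚ x
  rwa [Polynomial.aeval_def] at this


lemma isIntegral_of_mahlerM_lt_two {x : K} (h : mahlerM x < 2) : IsIntegral ℤ x := by
  have h2 := one_le_prodmax ((minpoly ℚ x).aroots ℂ)
  have hp : (primLead x : ℝ) < 2 := by
    have hpos : (0:ℝ) < (primLead x : ℝ) := by exact_mod_cast primLead_pos x
    rw [mahlerM] at h
    nlinarith
  have hp1 : primLead x = 1 := by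
    have h2' : primLead x < 2 := by exact_mod_cast hp
    have := primLead_pos x
    omega
  apply den_one_int
  intro i
  by_cases hi : i ∈ (minpoly ℚ x).support
  · have : ((minpoly ℚ x).coeff i).den ∣ primLead x := Finset.dvd_lcm hi
    rw [hp1] at this
    exact Nat.dvd_one.mp this
  · rw [Polynomial.notMem_support_iff.mp hi]
    rfl

set_option synthInstance.maxHeartbeats 1000000 in
/-- every complex root of the minimal polynomial is the image of `x` under an
embedding `K →+* ℂ`. -/
lemma exists_psi (x : K) {z : ℂ} (hz : z ∈ (minpoly ℚ x).aroots ℂ) :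
    ∃ ψ : K →+* ℂ, ψ x = z := by
  have hx : IsIntegral ℚ x := isIntegralQ x
  let pb := IntermediateField.adjoin.powerBasis hx
  have hz' : (Polynomial.aeval z) (minpoly ℚ pb.gen) = 0 := by
    rw [IntermediateField.adjoin.powerBasis_gen]
    erw [IntermediateField.minpoly_gen]
    exact (Polynomial.mem_aroots.mp hz).2
  let φ0 : ℚ⟮x⟯ →ₐ[ℚ] ℂ := pb.lift z hz'
  letI : Algebra (↥ℚ⟮x⟯) ℂ := φ0.toAlgebra
  haveI : Algebra.IsAlgebraic (↥ℚ⟮x⟯) K := ⟨fun y => (isIntegralQ y).tower_top.isAlgebraic⟩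
  let Ψ : K →ₐ[↥ℚ⟮x⟯] ℂ := IsAlgClosed.lift
  refine ⟨Ψ.toRingHom, ?_⟩
  have hxval : algebraMap (↥ℚ⟮x⟯) K pb.gen = x := by
    rw [IntermediateField.adjoin.powerBasis_gen]
    exact IntermediateField.AdjoinSimple.algebraMap_gen ℚ x
  have key : Ψ (algebraMap (↥ℚ⟮x⟯) K pb.gen) = z := by
    rw [Ψ.commutes pb.gen]
    exact pb.lift_gen z hz'
  rw [hxval] at key
  exact key


/-- bound for the image under any embedding of the product of the `F`-conjugates of an
algebraic integer `β`. -/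
lemma psi_bound (F : IntermediateField ℚ K) {β : K} (hβ : IsIntegral ℤ β) (ψ : K →+* ℂ) :
    ‖ψ (((minpoly (↥F) β).aroots K).prod)‖ ≤ mahlerM β := by
  set q : K[X] := (minpoly (↥F) β).map (algebraMap (↥F) K) with hqdef
  have haroots : (minpoly (↥F) β).aroots K = q.roots := rfl
  have hsplit : q.Splits := IsAlgClosed.splits q
  have hrootsmap : (q.map ψ).roots = q.roots.map ψ := hsplit.roots_map ψ
  have hdvd0 : minpoly (↥F) β ∣ (minpoly ℚ β).map (algebraMap ℚ (↥F)) := by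
    apply minpoly.dvd
    rw [aeval_map_algebraMap]
    exact minpoly.aeval ℚ β
  have hdvd : q.map ψ ∣ (minpoly ℚ β).map (algebraMap ℚ ℂ) := by
    rw [hqdef, Polynomial.map_map]
    have h2 := Polynomial.map_dvd (ψ.comp (algebraMap (↥F) K)) hdvd0
    rw [Polynomial.map_map] at h2
    have h3 : (ψ.comp (algebraMap (↥F) K)).comp (algebraMap ℚ (↥F)) = algebraMap ℚ ℂ :=
      Subsingleton.elim _ _
    rwa [h3] at h2
  have hPne : (minpoly ℚ β).map (algebraMap ℚ ℂ) ≠ 0 :=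
    Polynomial.map_ne_zero (minpoly.ne_zero (isIntegralQ β))
  have hle : (q.map ψ).roots ≤ ((minpoly ℚ β).map (algebraMap ℚ ℂ)).roots :=
    roots.le_of_dvd hPne hdvd
  have step1 : ‖ψ q.roots.prod‖ ≤
      ((q.roots.map ψ).map fun z => max 1 ‖z‖).prod := by
    rw [map_multiset_prod]
    exact abs_prod_le_prodmax _
  have step2 : ((q.roots.map ψ).map fun z => max 1 ‖z‖).prod ≤
      ((((minpoly ℚ β).map (algebraMap ℚ ℂ)).roots).map fun z => max 1 ‖z‖).prod :=
    prodmax_mono (hrootsmap ▸ hle)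
  have final : mahlerM β =
      ((((minpoly ℚ β).map (algebraMap ℚ ℂ)).roots).map fun z => max 1 ‖z‖).prod := by
    rw [mahlerM, primLead_eq_one hβ]
    rw [aroots_def]
    simp
  rw [haroots, final]
  exact le_trans step1 step2

/-- Kronecker's theorem in terms of `mahlerM`. -/
lemma rou_of_mahlerM_le_one {x : K} (hx0 : x ≠ 0) (hxi : IsIntegral ℤ x)
    (hM : mahlerM x ≤ 1) : IsRou x := by
  have hQ := isIntegralQ x
  set p := minpoly ℚ x with hpdef
  set R := p.aroots ℂ with hRdef
  have hp1 : primLead x = 1 := primLead_eq_one hxi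
  have hprodmax : ((R.map fun z => max 1 ‖z‖)).prod ≤ 1 := by
    rw [mahlerM, hp1] at hM
    simpa using hM
  have hle : ∀ z ∈ R, ‖z‖ ≤ 1 := by
    intro z hz
    have := le_trans (single_le_prodmax hz) hprodmax
    exact le_trans (le_max_right 1 ‖z‖) this
  -- the product of the absolute values of the roots is at least 1
  have hintcoeff := minpoly.isIntegrallyClosed_eq_field_fractions' ℚ hxi
  have hc0 : p.coeff 0 ≠ 0 := minpoly.coeff_zero_ne_zero hQ hx0
  set c : ℤ := (minpoly ℤ x).coeff 0 with hcdef
  have hcoeffc : p.coeff 0 = (c : ℚ) := by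
    rw [hpdef, hintcoeff, coeff_map, eq_intCast]
  have hcne : c ≠ 0 := by
    intro h
    rw [h] at hcoeffc
    exact hc0 (by simpa using hcoeffc)
  set P : ℂ[X] := p.map (algebraMap ℚ ℂ) with hPdef
  have hPmonic : P.Monic := (minpoly.monic hQ).map _
  have hPsplits : P.Splits := IsAlgClosed.splits P
  have hvieta : P.coeff 0 = (-1) ^ P.natDegree * P.roots.prod :=
    hPsplits.coeff_zero_eq_prod_roots_of_monic hPmonic
  have habs : ((R.map fun z => ‖z‖)).prod = |(c:ℝ)| := by
    have h1 : ‖P.coeff 0‖ = ‖P.roots.prod‖ := by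
      rw [hvieta, norm_mul, norm_pow]
      simp
    have h2 : P.coeff 0 = (c : ℂ) := by
      rw [hPdef, coeff_map, hcoeffc]
      simp
    rw [hRdef, aroots_def, ← hPdef, show ‖P.roots.prod‖ = (P.roots.map fun z => ‖z‖).prod from
      map_multiset_prod (normHom (α := ℂ)) P.roots] at *
    rw [← h1, h2]
    simpa using (Complex.norm_intCast c).symm
  have hone_le : (1:ℝ) ≤ ((R.map fun z => ‖z‖)).prod := by
    rw [habs]
    exact_mod_cast Int.one_le_abs (by exact_mod_cast hcne)
  have hall1 : ∀ z ∈ R, ‖z‖ = 1 := by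
    intro z hz
    refine le_antisymm (hle z hz) ?_
    by_contra hlt
    push_neg at hlt
    have hcons : z ::ₘ R.erase z = R := Multiset.cons_erase hz
    have hrest : (((R.erase z).map fun z => ‖z‖)).prod ≤ 1 :=
      prod_abs_le_one fun w hw => hle w (Multiset.mem_of_mem_erase hw)
    have hrest0 : (0:ℝ) ≤ (((R.erase z).map fun z => ‖z‖)).prod := by
      apply Multiset.prod_nonneg
      intro y hy
      obtain ⟨w, _, rfl⟩ := Multiset.mem_map.mp hy
      exact norm_nonneg w
    have hsplitprod : ((R.map fun z => ‖z‖)).prod =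
        ‖z‖ * (((R.erase z).map fun z => ‖z‖)).prod := by
      conv_lhs => rw [← hcons]
      rw [Multiset.map_cons, Multiset.prod_cons]
    nlinarith [norm_nonneg z]
  -- now apply Kronecker's theorem from mathlib in the number field ℚ⟮x⟯
  haveI : FiniteDimensional ℚ (↥ℚ⟮x⟯) := IntermediateField.adjoin.finiteDimensional hQ
  haveI : NumberField (↥ℚ⟮x⟯) := ⟨⟩
  set g := IntermediateField.AdjoinSimple.gen ℚ x with hgdef
  have hgx : algebraMap (↥ℚ⟮x⟯) K g = x := IntermediateField.AdjoinSimple.algebraMap_gen ℚ x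
  have hgi : IsIntegral ℤ g := by
    rw [← isIntegral_algebraMap_iff (algebraMap (↥ℚ⟮x⟯) K).injective, hgx]
    exact hxi
  have hnorm : ∀ φ : (↥ℚ⟮x⟯) →+* ℂ, ‖φ g‖ = 1 := by
    intro φ
    have hmem : φ g ∈ R := by
      rw [hRdef, Polynomial.mem_aroots]
      refine ⟨minpoly.ne_zero hQ, ?_⟩
      have hminpg : minpoly ℚ g = p := IntermediateField.minpoly_gen ℚ x
      have := Polynomial.aeval_algHom_apply φ.toRatAlgHom g (minpoly ℚ g)
      rw [minpoly.aeval, map_zero] at this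
      rw [← hminpg]
      exact this
    exact hall1 _ hmem
  obtain ⟨n, hn, hgn⟩ := NumberField.Embeddings.pow_eq_one_of_norm_eq_one (↥ℚ⟮x⟯) ℂ hgi hnorm
  refine ⟨n, hn, ?_⟩
  have := congrArg (algebraMap (↥ℚ⟮x⟯) K) hgn
  rwa [map_pow, map_one, hgx] at this


lemma prodmax_le_pow_card {mlt : Multiset ℂ} {B : ℝ} (hB : 1 ≤ B)
    (h : ∀ z ∈ mlt, ‖z‖ ≤ B) :
    (mlt.map fun z => max 1 ‖z‖).prod ≤ B ^ (Multiset.card mlt) := by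
  induction mlt using Multiset.induction_on with
  | empty => simp
  | cons z mlt ih =>
    rw [Multiset.map_cons, Multiset.prod_cons, Multiset.card_cons, pow_succ, mul_comm (B ^ _) B]
    have h1 : max 1 ‖z‖ ≤ B := max_le hB (h z (Multiset.mem_cons_self _ _))
    have h2 := ih fun w hw => h w (Multiset.mem_cons_of_mem hw)
    have h3 := one_le_prodmax mlt
    nlinarith

lemma weilH_le_of_roots_bound {γ : K} {B : ℝ} (hγi : IsIntegral ℤ γ) (hB : 1 ≤ B)
    (hroots : ∀ z ∈ (minpoly ℚ γ).aroots ℂ, ‖z‖ ≤ B) : weilH γ ≤ B := by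
  set d := (minpoly ℚ γ).natDegree with hd
  have hd0 : 0 < d := minpoly.natDegree_pos (isIntegralQ γ)
  have hcard : ((minpoly ℚ γ).aroots ℂ).card = d := by
    rw [aroots_def]
    rw [(splits_iff_card_roots).mp (IsAlgClosed.splits _)]
    exact (minpoly.monic (isIntegralQ γ)).natDegree_map _
  have hMB : mahlerM γ ≤ B ^ d := by
    rw [mahlerM, primLead_eq_one hγi]
    have h1 := prodmax_le_pow_card hB hroots
    rw [hcard] at h1
    simpa using h1
  have hM0 : (0:ℝ) ≤ mahlerM γ := le_trans zero_le_one (one_le_mahlerM γ)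
  have hB0 : (0:ℝ) ≤ B := le_trans zero_le_one hB
  calc weilH γ = mahlerM γ ^ ((d:ℝ))⁻¹ := rfl
  _ ≤ (B ^ d) ^ ((d:ℝ))⁻¹ := Real.rpow_le_rpow hM0 hMB (by positivity)
  _ = B := by
    rw [← Real.rpow_natCast B d, ← Real.rpow_mul hB0,
      mul_inv_cancel₀ (by exact_mod_cast hd0.ne'), Real.rpow_one]

set_option synthInstance.maxHeartbeats 1000000 in
set_option maxHeartbeats 1000000 in
/-- The key existence lemma in the small-factors case. -/
lemma key_exists (α : Kˣ) (hα : ¬ IsRou (α : K)) (a : ℕ → Kˣ)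
    (hfin : {n | a n ≠ 1}.Finite) (hprod : (∏ᶠ n, a n) = α)
    (hsmall : ∀ n, mahlerM (a n : K) < 2) :
    ∃ γ : K, γ ∈ IntermediateField.adjoin ℚ {(α : K)} ∧ 1 < weilH γ ∧
      ∃ n, weilH γ ≤ mahlerM (a n : K) := by
  classical
  set F := IntermediateField.adjoin ℚ {(α : K)} with hFdef
  set sfin := hfin.toFinset with hsdef
  have hαmem : (α : K) ∈ F := IntermediateField.mem_adjoin_simple_self ℚ (α : K)
  set αF : ↥F := ⟨(α : K), hαmem⟩ with hαF
  set S : Set K := ↑(sfin.image fun n => ((a n : K))) with hSdef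
  haveI : Finite ↥S := (sfin.image fun n => ((a n : K))).finite_toSet.to_subtype
  set E := IntermediateField.adjoin (↥F) S with hEdef
  haveI : FiniteDimensional (↥F) (↥E) :=
    IntermediateField.finiteDimensional_adjoin fun x _ => (isIntegralQ x).tower_top
  set m := Module.finrank (↥F) (↥E) with hm
  have hm0 : 0 < m := Module.finrank_pos
  have hginS : ∀ n ∈ sfin, ((a n : K)) ∈ E := fun n hn =>
    IntermediateField.subset_adjoin _ _ (Finset.mem_coe.mpr (Finset.mem_image_of_mem _ hn))
  set g : ℕ → ↥E := fun n => if hn : n ∈ sfin then ⟨(a n : K), hginS n hn⟩ else 1 with hgdef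
  have hgval : ∀ n ∈ sfin, algebraMap (↥E) K (g n) = ((a n : K)) := by
    intro n hn
    rw [hgdef]
    simp only [dif_pos hn]
    rfl
  have hprodK : ∏ n ∈ sfin, ((a n : K)) = (α : K) := by
    have h1 : (∏ᶠ n, a n) = ∏ n ∈ sfin, a n := finprod_eq_prod a hfin
    rw [hprod] at h1
    have h2 := congrArg (Units.coeHom K) h1
    rw [map_prod] at h2
    exact h2.symm
  have hprodEK : algebraMap (↥E) K (∏ n ∈ sfin, g n) = (α : K) := by
    rw [map_prod, Finset.prod_congr rfl hgval, hprodK]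
  have hprodE_eq : (∏ n ∈ sfin, g n) = algebraMap (↥F) (↥E) αF := by
    apply (algebraMap (↥E) K).injective
    rw [hprodEK, ← IsScalarTower.algebraMap_apply]
    rfl
  have hnormprod : ∏ n ∈ sfin, Algebra.norm (↥F) (g n) = αF ^ m := by
    rw [← map_prod (Algebra.norm (↥F) : ↥E →* ↥F) g sfin, hprodE_eq, Algebra.norm_algebraMap]
  have hKeq : (α : K) ^ m = ∏ n ∈ sfin, algebraMap (↥F) K (Algebra.norm (↥F) (g n)) := by
    rw [← map_prod (algebraMap (↥F) K) (fun n => Algebra.norm (↥F) (g n)) sfin,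
      hnormprod, map_pow]
    rfl
  have hper : ∀ n ∈ sfin, ∃ k : ℕ,
      algebraMap (↥F) K (Algebra.norm (↥F) (g n)) =
        (((minpoly (↥F) ((a n : K))).aroots K).prod) ^ k := by
    intro n hn
    have hmineq : minpoly (↥F) ((a n : K)) = minpoly (↥F) (g n) := by
      have := minpoly.algebraMap_eq (A := ↥F) (algebraMap (↥E) K).injective (g n)
      rw [hgval n hn] at this
      exact this
    have hsplits : ((minpoly (↥F) (g n)).map (algebraMap (↥F) K)).Splits :=
      IsAlgClosed.splits _
    rw [hmineq]
    exact ⟨_, Algebra.norm_eq_prod_roots (AlgebraicClosure ℚ) hsplits⟩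
  have hdelta_mem : ∀ n : ℕ, (((minpoly (↥F) ((a n : K))).aroots K).prod) ∈ F := by
    intro n
    have hsplits : ((minpoly (↥F) ((a n : K))).map (algebraMap (↥F) K)).Splits :=
      IsAlgClosed.splits _
    have := IntermediateField.AdjoinSimple.norm_gen_eq_prod_roots ((a n : K)) hsplits
    rw [← this]
    exact SetLike.coe_mem _
  have hex : ∃ n ∈ sfin, ¬ IsRou (((minpoly (↥F) ((a n : K))).aroots K).prod) := by
    by_contra hcon
    push_neg at hcon
    apply hα
    apply IsRou.of_pow hm0
    rw [hKeq]
    apply Finset.prod_induction _ IsRou (fun _ _ => IsRou.mul) IsRou.one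
    intro n hn
    obtain ⟨k, hk⟩ := hper n hn
    rw [hk]
    exact (hcon n hn).pow k
  obtain ⟨n, hn, hnrou⟩ := hex
  set β := ((a n : K)) with hβ
  set γ : K := ((minpoly (↥F) β).aroots K).prod with hγ
  have hγmem : γ ∈ F := hdelta_mem n
  have hβint : IsIntegral ℤ β := isIntegral_of_mahlerM_lt_two (hsmall n)
  have hβ0 : β ≠ 0 := Units.ne_zero (a n)
  have hroot_all : ∀ z ∈ (minpoly (↥F) β).aroots K, (Polynomial.aeval z) (minpoly ℚ β) = 0 := by
    intro z hz
    have hdvd0 : minpoly (↥F) β ∣ (minpoly ℚ β).map (algebraMap ℚ (↥F)) :=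
      minpoly.dvd _ _ (by rw [aeval_map_algebraMap]; exact minpoly.aeval ℚ β)
    obtain ⟨q, hq⟩ := hdvd0
    have hz0 : (Polynomial.aeval z) (minpoly (↥F) β) = 0 := (Polynomial.mem_aroots.mp hz).2
    have : (Polynomial.aeval z) ((minpoly ℚ β).map (algebraMap ℚ (↥F))) = 0 := by
      rw [hq, map_mul, hz0, zero_mul]
    rwa [aeval_map_algebraMap] at this
  have hroots_int : ∀ z ∈ (minpoly (↥F) β).aroots K, IsIntegral ℤ z := by
    intro z hz
    have h0 := hroot_all z hz
    refine ⟨minpoly ℤ β, minpoly.monic hβint, ?_⟩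
    rw [minpoly.isIntegrallyClosed_eq_field_fractions' ℚ hβint, aeval_map_algebraMap] at h0
    rwa [Polynomial.aeval_def] at h0
  have hγint : IsIntegral ℤ γ := by
    rw [hγ]
    exact Subalgebra.multiset_prod_mem (integralClosure ℤ K) fun z hz => hroots_int z hz
  have hγ0 : γ ≠ 0 := by
    rw [hγ]
    apply Multiset.prod_ne_zero
    intro h0mem
    have h00 := hroot_all 0 h0mem
    rw [Polynomial.aeval_def, Polynomial.eval₂_at_zero] at h00
    exact minpoly.coeff_zero_ne_zero (isIntegralQ β) hβ0
      ((algebraMap ℚ K).injective (h00.trans (map_zero _).symm))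
  have hMγ : 1 < mahlerM γ := by
    rcases lt_or_ge 1 (mahlerM γ) with h | h
    · exact h
    · exact absurd (rou_of_mahlerM_le_one hγ0 hγint h) hnrou
  have hBbound : ∀ z ∈ (minpoly ℚ γ).aroots ℂ, ‖z‖ ≤ mahlerM β := by
    intro z hz
    obtain ⟨ψ, hψ⟩ := exists_psi γ hz
    rw [← hψ, hγ]
    exact psi_bound F hβint ψ
  have hwB : weilH γ ≤ mahlerM β := weilH_le_of_roots_bound hγint (one_le_mahlerM β) hBbound
  have h1w : 1 < weilH γ := by
    have hd0 : (0:ℝ) < (((minpoly ℚ γ).natDegree : ℝ))⁻¹ := by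
      have := minpoly.natDegree_pos (isIntegralQ γ)
      positivity
    rw [weilH]
    exact (Real.one_lt_rpow_iff_of_pos (lt_trans one_pos hMγ)).mpr (Or.inl ⟨hMγ, hd0⟩)
  exact ⟨γ, hγmem, h1w, n, hwB⟩


lemma weilH_two : weilH (algebraMap ℚ K 2) = 2 := by
  have hmin : minpoly ℚ (algebraMap ℚ K 2) = X - C 2 := minpoly.eq_X_sub_C K (2:ℚ)
  have hint : IsIntegral ℤ (algebraMap ℚ K 2) := by
    have : algebraMap ℚ K 2 = algebraMap ℤ K 2 := by
      rw [IsScalarTower.algebraMap_apply ℤ ℚ K]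
      norm_num
    rw [this]
    exact isIntegral_algebraMap
  have hM : mahlerM (algebraMap ℚ K 2) = 2 := by
    rw [mahlerM, primLead_eq_one hint, hmin, aroots_def]
    rw [Polynomial.map_sub, Polynomial.map_X, Polynomial.map_C]
    rw [show ((algebraMap ℚ ℂ) 2 : ℂ) = (2:ℂ) by norm_num]
    rw [roots_X_sub_C]
    simp [Complex.norm_two]
  rw [weilH, hM, hmin, natDegree_X_sub_C]
  norm_num

lemma bddAbove_mahler (a : ℕ → Kˣ) (hfin : {n | a n ≠ 1}.Finite) :
    BddAbove (Set.range fun n => mahlerM (a n : K)) := by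
  apply Set.Finite.bddAbove
  apply Set.Finite.subset
    (Set.Finite.union (hfin.image fun n => mahlerM (a n : K))
      (Set.finite_singleton (mahlerM ((1:Kˣ) : K))))
  rintro x ⟨n, rfl⟩
  by_cases h : a n = 1
  · right
    simp [h]
  · left
    exact ⟨n, h, rfl⟩

end StrongMetricAux

/-- **Theorem 1 (Strong metric bound).** If `α` is a non-zero algebraic number that is
not a root of unity, then `M_∞(α) ≥ inf { H(γ) : γ ∈ ℚ(α), H(γ) > 1 }`. -/
theorem strong_metric_bound (α : Kˣ) (hα : ¬ ∃ n : ℕ, 0 < n ∧ α ^ n = 1) :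
    sInf {h : ℝ | ∃ γ : K, γ ∈ IntermediateField.adjoin ℚ {(α : K)} ∧
      1 < weilH γ ∧ h = weilH γ} ≤ MInf α := by
  classical
  set Sset := {h : ℝ | ∃ γ : K, γ ∈ IntermediateField.adjoin ℚ {(α : K)} ∧
      1 < weilH γ ∧ h = weilH γ} with hSset
  have hbddS : BddBelow Sset := by
    refine ⟨1, ?_⟩
    rintro x ⟨γ, _, h1, rfl⟩
    exact le_of_lt h1
  have hαrou : ¬ StrongMetricAux.IsRou (α : K) := by
    rintro ⟨n, hn, h⟩
    refine hα ⟨n, hn, Units.ext ?_⟩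
    rw [Units.val_pow_eq_pow_val]
    exact h
  rw [MInf]
  apply le_csInf
  · refine ⟨_, fun n => if n = 0 then α else 1, ?_, ?_, rfl⟩
    · apply Set.Finite.subset (Set.finite_singleton 0)
      intro n hn
      simp only [Set.mem_setOf_eq, ne_eq] at hn
      by_contra hne
      exact hn (if_neg hne)
    · rw [finprod_eq_single _ 0 fun x hx => if_neg hx]
      exact if_pos rfl
  · rintro b ⟨a, hfin, hprod, rfl⟩
    have hbdd := StrongMetricAux.bddAbove_mahler a hfin
    by_cases hbig : ∃ n, 2 ≤ mahlerM (a n : K)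
    · obtain ⟨n, hn⟩ := hbig
      have hmem : weilH (algebraMap ℚ K 2) ∈ Sset :=
        ⟨algebraMap ℚ K 2, IntermediateField.algebraMap_mem _ 2,
          by rw [StrongMetricAux.weilH_two]; norm_num, rfl⟩
      calc sInf Sset ≤ weilH (algebraMap ℚ K 2) := csInf_le hbddS hmem
      _ = 2 := StrongMetricAux.weilH_two
      _ ≤ mahlerM ((a n : K)) := hn
      _ ≤ ⨆ n, mahlerM ((a n : K)) := le_ciSup hbdd n
    · push_neg at hbig
      obtain ⟨γ, hmem, h1, n, hw⟩ :=
        StrongMetricAux.key_exists α hαrou a hfin hprod hbig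
      calc sInf Sset ≤ weilH γ := csInf_le hbddS ⟨γ, hmem, h1, rfl⟩
      _ ≤ mahlerM ((a n : K)) := hw
      _ ≤ ⨆ n, mahlerM ((a n : K)) := le_ciSup hbdd n
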